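/- Let n ≥ 2 and M ∈ (0, 1/n), and let V(s) = 1 - (e^{-ns} + n e^{s})/((n+1)(M+1)). Then V has exactly two zeros s_- < 0 < s_+, V > 0 on (s_-, s_+), and |V'(s_+)| < V'(s_-), i.e. (e^{s_+} - e^{-n s_+}) < (e^{-n s_-} - e^{s_-}). -/

import Mathlib

open Real Finset

private lemma key_aux (n : ℕ) (hn : 1 ≤ n) (j : ℕ) :
    ((n:ℝ)+1)^j * ((n:ℝ) - j) ≤ ((n:ℝ)-1)^j * ((n:ℝ) + j) := by
  have hn1 : (1:ℝ) ≤ (n:ℝ) := by exact_mod_cast hn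
  induction j with
  | zero => simp
  | succ j ih =>
    have hj0 : (0:ℝ) ≤ (j:ℝ) := Nat.cast_nonneg j
    have h1 : (0:ℝ) ≤ (n:ℝ) - 1 := by linarith
    have h2 : (0:ℝ) ≤ ((n:ℝ)-1)^j := pow_nonneg h1 j
    have h3 : (0:ℝ) ≤ ((n:ℝ)+1)^j := by positivity
    push_cast
    rcases le_or_gt ((n:ℝ) - ((j:ℝ)+1)) 0 with hc | hc
    · have hL : ((n:ℝ)+1)^(j+1) * ((n:ℝ) - ((j:ℝ)+1)) ≤ 0 :=
        mul_nonpos_of_nonneg_of_nonpos (by positivity) hc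
      have hR : (0:ℝ) ≤ ((n:ℝ)-1)^(j+1) * ((n:ℝ) + ((j:ℝ)+1)) :=
        mul_nonneg (pow_nonneg h1 _) (by linarith)
      linarith
    · have hnj : (0:ℝ) < (n:ℝ) + (j:ℝ) := by linarith
      have step : ((n:ℝ)-(j:ℝ)-1) * (((n:ℝ)+1) * ((n:ℝ)+(j:ℝ))) ≤
          ((n:ℝ)-(j:ℝ)) * (((n:ℝ)-1) * ((n:ℝ)+(j:ℝ)+1)) := by nlinarith [sq_nonneg (j:ℝ)]
      have H1 : ((n:ℝ)+1)^(j+1) * ((n:ℝ) - ((j:ℝ)+1)) * ((n:ℝ)+(j:ℝ)) ≤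
          ((n:ℝ)-1)^(j+1) * ((n:ℝ) + ((j:ℝ)+1)) * ((n:ℝ)+(j:ℝ)) := by
        calc ((n:ℝ)+1)^(j+1) * ((n:ℝ) - ((j:ℝ)+1)) * ((n:ℝ)+(j:ℝ))
            = ((n:ℝ)+1)^j * (((n:ℝ)-(j:ℝ)-1) * (((n:ℝ)+1)*((n:ℝ)+(j:ℝ)))) := by ring
          _ ≤ ((n:ℝ)+1)^j * (((n:ℝ)-(j:ℝ)) * (((n:ℝ)-1)*((n:ℝ)+(j:ℝ)+1))) :=
              mul_le_mul_of_nonneg_left step h3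
          _ = (((n:ℝ)-1)*((n:ℝ)+(j:ℝ)+1)) * (((n:ℝ)+1)^j * ((n:ℝ)-(j:ℝ))) := by ring
          _ ≤ (((n:ℝ)-1)*((n:ℝ)+(j:ℝ)+1)) * (((n:ℝ)-1)^j * ((n:ℝ)+(j:ℝ))) := by
              apply mul_le_mul_of_nonneg_left ih (by nlinarith)
          _ = ((n:ℝ)-1)^(j+1) * ((n:ℝ) + ((j:ℝ)+1)) * ((n:ℝ)+(j:ℝ)) := by ring
      exact le_of_mul_le_mul_right H1 hnj

private lemma coeff_aux (n k : ℕ) (hn : 2 ≤ n) (hk : k < n) :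
    ((n:ℝ)+1)^(k+1) * (n.choose (k+1) : ℝ) ≤
      ((n:ℝ)-1)^k * (((n:ℝ)-1) * (n.choose (k+1):ℝ) + 2*(n:ℝ) * (n.choose k : ℝ)) := by
  have hkr : (k:ℝ) < (n:ℝ) := by exact_mod_cast hk
  have hkn : (0:ℝ) < (n:ℝ) - (k:ℝ) := by linarith
  have hch : (n.choose (k+1) : ℝ) * ((k:ℝ)+1) = (n.choose k : ℝ) * ((n:ℝ) - (k:ℝ)) := by
    have h := Nat.choose_succ_right_eq n k
    calc (n.choose (k+1):ℝ) * ((k:ℝ)+1) = ((n.choose (k+1) * (k+1) : ℕ) : ℝ) := by push_cast; ring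
      _ = ((n.choose k * (n - k) : ℕ):ℝ) := by rw [h]
      _ = (n.choose k : ℝ) * ((n:ℝ)-(k:ℝ)) := by push_cast [Nat.cast_sub hk.le]; ring
  have key := key_aux n (by omega) k
  have hn1 : (1:ℝ) ≤ (n:ℝ) := by exact_mod_cast (by omega : 1 ≤ n)
  have h1 : (0:ℝ) ≤ (n:ℝ) - 1 := by linarith
  have e2 : ((n:ℝ)-1)^k * (((n:ℝ)-1)*(n.choose (k+1):ℝ) + 2*(n:ℝ)*(n.choose k:ℝ)) * ((n:ℝ)-(k:ℝ))
      = (n.choose (k+1):ℝ) * (((n:ℝ)+1) * (((n:ℝ)-1)^k * ((n:ℝ)+(k:ℝ)))) := by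
    linear_combination (-(((n:ℝ)-1)^k * (2*(n:ℝ)))) * hch
  have H : ((n:ℝ)+1)^(k+1) * (n.choose (k+1):ℝ) * ((n:ℝ)-(k:ℝ)) ≤
      ((n:ℝ)-1)^k * (((n:ℝ)-1)*(n.choose (k+1):ℝ) + 2*(n:ℝ)*(n.choose k:ℝ)) * ((n:ℝ)-(k:ℝ)) := by
    rw [e2]
    calc ((n:ℝ)+1)^(k+1) * (n.choose (k+1):ℝ) * ((n:ℝ)-(k:ℝ))
        = (n.choose (k+1):ℝ) * (((n:ℝ)+1) * (((n:ℝ)+1)^k * ((n:ℝ)-(k:ℝ)))) := by ring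
      _ ≤ (n.choose (k+1):ℝ) * (((n:ℝ)+1) * (((n:ℝ)-1)^k * ((n:ℝ)+(k:ℝ)))) := by
          apply mul_le_mul_of_nonneg_left _ (Nat.cast_nonneg _)
          apply mul_le_mul_of_nonneg_left key (by linarith)
  exact le_of_mul_le_mul_right H hkn

private lemma poly_aux (n : ℕ) (hn : 2 ≤ n) (z : ℝ) (hz : 1 < z) :
    ((n:ℝ)+1)^(n+1) * z^n < (2*(n:ℝ)*z - ((n:ℝ)-1)) * (((n:ℝ)-1)*z + 2)^n := by
  have ha2 : (2:ℝ) ≤ (n:ℝ) := by exact_mod_cast hn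
  obtain ⟨w, hw, rfl⟩ : ∃ w : ℝ, 0 < w ∧ z = 1 + w := ⟨z - 1, by linarith, by ring⟩
  have e0 : ((n:ℝ)-1)*(1+w) + 2 = ((n:ℝ)-1)*w + ((n:ℝ)+1) := by ring
  have e1 : 2*(n:ℝ)*(1+w) - ((n:ℝ)-1) = (((n:ℝ)+1) + 2*(n:ℝ)*w) := by ring
  have E1 : (((n:ℝ)-1)*w + ((n:ℝ)+1))^n
      = ∑ k ∈ range (n+1), (((n:ℝ)-1)*w)^k * ((n:ℝ)+1)^(n-k) * (n.choose k : ℝ) :=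
    add_pow _ _ n
  have E2 : ((1:ℝ) + w)^n = ∑ k ∈ range (n+1), w^k * (n.choose k : ℝ) := by
    rw [add_comm, add_pow]; simp
  rw [e0, e1, E1, E2, Finset.mul_sum, Finset.mul_sum]
  have hsplit : ∑ k ∈ range (n+1),
        (((n:ℝ)+1) + 2*(n:ℝ)*w) * ((((n:ℝ)-1)*w)^k * ((n:ℝ)+1)^(n-k) * (n.choose k:ℝ))
      = (∑ k ∈ range (n+1), ((n:ℝ)+1) * ((((n:ℝ)-1)*w)^k * ((n:ℝ)+1)^(n-k) * (n.choose k:ℝ)))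
      + ∑ k ∈ range (n+1), 2*(n:ℝ)*w * ((((n:ℝ)-1)*w)^k * ((n:ℝ)+1)^(n-k) * (n.choose k:ℝ)) := by
    rw [← Finset.sum_add_distrib]; apply Finset.sum_congr rfl; intros; ring
  rw [hsplit]
  have PA : ∑ k ∈ range (n+1), ((n:ℝ)+1)^(n+1) * (w^k * (n.choose k:ℝ))
      = (∑ k ∈ range n, ((n:ℝ)+1)^(n+1) * (w^(k+1) * (n.choose (k+1):ℝ))) + ((n:ℝ)+1)^(n+1) := by
    rw [Finset.sum_range_succ']; congr 1; simp
  have PB : ∑ k ∈ range (n+1), ((n:ℝ)+1) * ((((n:ℝ)-1)*w)^k * ((n:ℝ)+1)^(n-k) * (n.choose k:ℝ))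
      = (∑ k ∈ range n, ((n:ℝ)+1) * ((((n:ℝ)-1)*w)^(k+1) * ((n:ℝ)+1)^(n-(k+1)) * (n.choose (k+1):ℝ)))
        + ((n:ℝ)+1)^(n+1) := by
    rw [Finset.sum_range_succ']; congr 1; simp; ring
  have PC : ∑ k ∈ range (n+1), 2*(n:ℝ)*w * ((((n:ℝ)-1)*w)^k * ((n:ℝ)+1)^(n-k) * (n.choose k:ℝ))
      = (∑ k ∈ range n, 2*(n:ℝ)*w * ((((n:ℝ)-1)*w)^k * ((n:ℝ)+1)^(n-k) * (n.choose k:ℝ)))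
        + 2*(n:ℝ)*w * ((((n:ℝ)-1)*w)^n * (n.choose n:ℝ)) := by
    rw [Finset.sum_range_succ]; congr 1; simp
  rw [PA, PB, PC]
  have hterm : ∀ k ∈ range n, ((n:ℝ)+1)^(n+1) * (w^(k+1) * (n.choose (k+1):ℝ))
      ≤ ((n:ℝ)+1) * ((((n:ℝ)-1)*w)^(k+1) * ((n:ℝ)+1)^(n-(k+1)) * (n.choose (k+1):ℝ))
        + 2*(n:ℝ)*w * ((((n:ℝ)-1)*w)^k * ((n:ℝ)+1)^(n-k) * (n.choose k:ℝ)) := by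
    intro k hk
    have hkn : k < n := mem_range.mp hk
    have hcoeff := coeff_aux n k hn hkn
    obtain ⟨m, rfl⟩ : ∃ m, n = k + 1 + m := ⟨n - (k+1), by omega⟩
    have h1 : k + 1 + m - (k+1) = m := by omega
    have h2 : k + 1 + m - k = m + 1 := by omega
    rw [h1, h2]
    have h3 : ((((k+1+m:ℕ)):ℝ)+1)^(k+1+m+1)
        = (((k+1+m:ℕ):ℝ)+1)^(m+1) * (((k+1+m:ℕ):ℝ)+1)^(k+1) := by
      rw [← pow_add]; congr 1; omega
    calc (((k+1+m:ℕ):ℝ)+1)^(k+1+m+1) * (w^(k+1) * ((k+1+m).choose (k+1):ℝ))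
        = (((k+1+m:ℕ):ℝ)+1)^(m+1) * (((((k+1+m:ℕ):ℝ)+1)^(k+1) * ((k+1+m).choose (k+1):ℝ)) * w^(k+1)) := by
          rw [h3]; ring
      _ ≤ (((k+1+m:ℕ):ℝ)+1)^(m+1) * (((((k+1+m:ℕ):ℝ)-1)^k * ((((k+1+m:ℕ):ℝ)-1) * ((k+1+m).choose (k+1):ℝ)
            + 2*((k+1+m:ℕ):ℝ) * ((k+1+m).choose k : ℝ))) * w^(k+1)) := by
          apply mul_le_mul_of_nonneg_left (mul_le_mul_of_nonneg_right hcoeff (by positivity)) (by positivity)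
      _ = (((k+1+m:ℕ):ℝ)+1) * (((((k+1+m:ℕ):ℝ)-1)*w)^(k+1) * (((k+1+m:ℕ):ℝ)+1)^m * ((k+1+m).choose (k+1):ℝ))
            + 2*((k+1+m:ℕ):ℝ)*w * (((((k+1+m:ℕ):ℝ)-1)*w)^k * (((k+1+m:ℕ):ℝ)+1)^(m+1) * ((k+1+m).choose k:ℝ)) := by
          rw [mul_pow, mul_pow]; ring
  have hsum := Finset.sum_le_sum hterm
  rw [Finset.sum_add_distrib] at hsum
  have hpos : 0 < 2*(n:ℝ)*w * ((((n:ℝ)-1)*w)^n * (n.choose n:ℝ)) := by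
    have h : (0:ℝ) < ((n:ℝ)-1)*w := by nlinarith
    have : (0:ℝ) < (n.choose n : ℝ) := by simp
    positivity
  linarith

private lemma crux (n : ℕ) (hn : 2 ≤ n) (B : ℝ) (hB : 1 < B) (E : ℝ)
    (hE : E = (2*(B^n)⁻¹ + ((n:ℝ)-1)*B) / ((n:ℝ)+1)) :
    (E^n)⁻¹ + (n:ℝ)*E < (B^n)⁻¹ + (n:ℝ)*B := by
  have ha2 : (2:ℝ) ≤ (n:ℝ) := by exact_mod_cast hn
  have hB0 : (0:ℝ) < B := by linarith
  have hp : (0:ℝ) < B^n := pow_pos hB0 n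
  have hpne : B^n ≠ 0 := ne_of_gt hp
  have hane : ((n:ℝ)+1) ≠ 0 := by positivity
  have hz1 : (1:ℝ) < B^(n+1) := one_lt_pow₀ hB (by omega)
  have hu0 : (0:ℝ) < ((n:ℝ)-1)*B^(n+1) + 2 := by nlinarith
  have hun : (0:ℝ) < (((n:ℝ)-1)*B^(n+1) + 2)^n := pow_pos hu0 n
  have hpoly := poly_aux n hn (B^(n+1)) hz1
  have hEu : E = (((n:ℝ)-1)*B^(n+1) + 2) / (((n:ℝ)+1) * B^n) := by
    rw [hE, pow_succ]; field_simp; ring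
  have hE0 : (0:ℝ) < E := by rw [hEu]; exact div_pos hu0 (by positivity)
  have hEn : (E^n)⁻¹ = ((((n:ℝ)+1) * B^n)^n) / ((((n:ℝ)-1)*B^(n+1) + 2)^n) := by
    rw [hEu, div_pow, inv_div]
  have hid : (((n:ℝ)+1)*(1+(n:ℝ)*B^(n+1)))*((((n:ℝ)-1)*B^(n+1) + 2)^n)
      - (n:ℝ)*(((((n:ℝ)-1)*B^(n+1) + 2)^n) * (((n:ℝ)-1)*B^(n+1) + 2))
      = (2*(n:ℝ)*B^(n+1) - ((n:ℝ)-1)) * ((((n:ℝ)-1)*B^(n+1) + 2)^n) := by ring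
  have target' : ((n:ℝ)+1)^(n+1) * (B^(n+1))^n
      + (n:ℝ)*(((((n:ℝ)-1)*B^(n+1) + 2)^n) * (((n:ℝ)-1)*B^(n+1) + 2))
      < (((n:ℝ)+1)*(1+(n:ℝ)*B^(n+1)))*((((n:ℝ)-1)*B^(n+1) + 2)^n) := by linarith
  have hD : (0:ℝ) < (((n:ℝ)-1)*B^(n+1) + 2)^n * (((n:ℝ)+1) * B^n) :=
    mul_pos hun (mul_pos (by linarith) hp)
  refine lt_of_mul_lt_mul_right ?_ hD.le
  have hune : (((n:ℝ)-1)*B^(n+1) + 2)^n ≠ 0 := ne_of_gt hun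
  have e1 : ((E^n)⁻¹ + (n:ℝ)*E) * ((((n:ℝ)-1)*B^(n+1) + 2)^n * (((n:ℝ)+1) * B^n))
      = ((n:ℝ)+1)^(n+1) * (B^(n+1))^n
        + (n:ℝ)*(((((n:ℝ)-1)*B^(n+1) + 2)^n) * (((n:ℝ)-1)*B^(n+1) + 2)) := by
    rw [hEn, hEu, mul_pow]; field_simp; ring
  have e2 : ((B^n)⁻¹ + (n:ℝ)*B) * ((((n:ℝ)-1)*B^(n+1) + 2)^n * (((n:ℝ)+1) * B^n))
      = (((n:ℝ)+1)*(1+(n:ℝ)*B^(n+1)))*((((n:ℝ)-1)*B^(n+1) + 2)^n) := by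
    field_simp; ring
  rw [e1, e2]; exact target'

private lemma exp_le_one' {x : ℝ} (h : x ≤ 0) : Real.exp x ≤ 1 := by
  simpa using Real.exp_le_exp.mpr h

private lemma one_le_exp' {x : ℝ} (h : 0 ≤ x) : 1 ≤ Real.exp x := by
  simpa using Real.exp_le_exp.mpr h

private lemma gmono (n : ℕ) (hn : 2 ≤ n) :
    StrictMonoOn (fun s => Real.exp (-(n:ℝ)*s) + (n:ℝ)*Real.exp s) (Set.Ici 0) := by
  intro s hs t ht hst
  simp only [Set.mem_Ici] at hs ht
  dsimp only
  have ha2 : (2:ℝ) ≤ (n:ℝ) := by exact_mod_cast hn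
  have h1 : Real.exp (-(n:ℝ)*t) = Real.exp (-(n:ℝ)*s) * Real.exp (-(n:ℝ)*(t-s)) := by
    rw [← Real.exp_add]; ring_nf
  have h6 : Real.exp t = Real.exp s * Real.exp (t-s) := by rw [← Real.exp_add]; ring_nf
  have h2 := Real.add_one_le_exp (-(n:ℝ)*(t-s))
  have h3 : Real.exp (-(n:ℝ)*(t-s)) ≤ 1 := exp_le_one' (by nlinarith)
  have h4 : Real.exp (-(n:ℝ)*s) ≤ 1 := exp_le_one' (by nlinarith)
  have h5 := Real.exp_pos (-(n:ℝ)*s)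
  have h7 : (t-s) + 1 < Real.exp (t-s) := Real.add_one_lt_exp (by linarith)
  have h8 : 1 ≤ Real.exp s := one_le_exp' hs
  have h9 := Real.exp_pos s
  have key1 : Real.exp (-(n:ℝ)*s) - Real.exp (-(n:ℝ)*t) ≤ (n:ℝ)*(t-s) := by
    rw [h1]
    have hm : Real.exp (-(n:ℝ)*s) * (1 - Real.exp (-(n:ℝ)*(t-s)))
        ≤ 1 * (1 - Real.exp (-(n:ℝ)*(t-s))) :=
      mul_le_mul_of_nonneg_right h4 (by linarith)
    nlinarith
  have key2 : (n:ℝ)*(t-s) < (n:ℝ)*(Real.exp t - Real.exp s) := by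
    have h10 : (t - s) < Real.exp s * (Real.exp (t-s) - 1) := by
      nlinarith [mul_nonneg (by linarith : (0:ℝ) ≤ Real.exp s - 1)
        (by linarith : (0:ℝ) ≤ Real.exp (t-s) - 1)]
    have h11 := mul_lt_mul_of_pos_left h10 (show (0:ℝ) < (n:ℝ) by linarith)
    rw [h6]; nlinarith
  linarith

private lemma ganti (n : ℕ) (hn : 2 ≤ n) :
    StrictAntiOn (fun s => Real.exp (-(n:ℝ)*s) + (n:ℝ)*Real.exp s) (Set.Iic 0) := by
  intro s hs t ht hst
  simp only [Set.mem_Iic] at hs ht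
  dsimp only
  have ha2 : (2:ℝ) ≤ (n:ℝ) := by exact_mod_cast hn
  have h1 : Real.exp (-(n:ℝ)*s) = Real.exp (-(n:ℝ)*t) * Real.exp ((n:ℝ)*(t-s)) := by
    rw [← Real.exp_add]; ring_nf
  have h6 : Real.exp s = Real.exp t * Real.exp (-(t-s)) := by rw [← Real.exp_add]; ring_nf
  have h2 : (n:ℝ)*(t-s) + 1 < Real.exp ((n:ℝ)*(t-s)) := Real.add_one_lt_exp (by nlinarith)
  have h3 : 1 ≤ Real.exp (-(n:ℝ)*t) := one_le_exp' (by nlinarith)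
  have h4 : Real.exp t ≤ 1 := exp_le_one' ht
  have h5 := Real.exp_pos (-(n:ℝ)*t)
  have h7 := Real.add_one_le_exp (-(t-s))
  have h8 := Real.exp_pos t
  have hZ : Real.exp (-(t-s)) ≤ 1 := exp_le_one' (by linarith)
  have key1 : (n:ℝ)*(t-s) < Real.exp (-(n:ℝ)*s) - Real.exp (-(n:ℝ)*t) := by
    rw [h1]
    have hm : 1 * (Real.exp ((n:ℝ)*(t-s)) - 1)
        ≤ Real.exp (-(n:ℝ)*t) * (Real.exp ((n:ℝ)*(t-s)) - 1) :=
      mul_le_mul_of_nonneg_right h3 (by nlinarith)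
    nlinarith
  have key2 : (n:ℝ)*(Real.exp t - Real.exp s) ≤ (n:ℝ)*(t-s) := by
    have h9 : Real.exp t - Real.exp s ≤ t - s := by
      rw [h6]
      have hm : Real.exp t * (1 - Real.exp (-(t-s))) ≤ 1 * (1 - Real.exp (-(t-s))) :=
        mul_le_mul_of_nonneg_right h4 (by linarith)
      nlinarith
    have := mul_le_mul_of_nonneg_left h9 (show (0:ℝ) ≤ (n:ℝ) by linarith)
    linarith
  linarith

/-- The limit profile V has exactly two zeros s₋ < 0 < s₊, is positive between them,
and the boundary derivatives satisfy e^{s₊} - e^{-n s₊} < e^{-n s₋} - e^{s₋}. -/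
theorem stmt8 (n : ℕ) (hn : 2 ≤ n) (M : ℝ) (hM : M ∈ Set.Ioo 0 (1 / (n : ℝ)))
    (V : ℝ → ℝ)
    (hV : V = fun s => 1 - (Real.exp (-(n : ℝ) * s) + (n : ℝ) * Real.exp s)
      / (((n : ℝ) + 1) * (M + 1))) :
    ∃ sm sp : ℝ, sm < 0 ∧ 0 < sp ∧ V sm = 0 ∧ V sp = 0 ∧
      (∀ s : ℝ, V s = 0 → s = sm ∨ s = sp) ∧
      (∀ s ∈ Set.Ioo sm sp, 0 < V s) ∧
      Real.exp sp - Real.exp (-(n : ℝ) * sp)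
        < Real.exp (-(n : ℝ) * sm) - Real.exp sm := by
  obtain ⟨hM0, hM1⟩ := hM
  have ha2 : (2:ℝ) ≤ (n:ℝ) := by exact_mod_cast hn
  set g : ℝ → ℝ := fun s => Real.exp (-(n:ℝ)*s) + (n:ℝ)*Real.exp s with hg
  set c : ℝ := ((n:ℝ)+1)*(M+1) with hc
  have hc1 : (n:ℝ)+1 < c := by rw [hc]; nlinarith
  have hc0 : (0:ℝ) < c := by linarith
  have hcne : c ≠ 0 := ne_of_gt hc0
  have hVg : ∀ s, V s = (c - g s)/c := by
    intro s; rw [hV]; dsimp only; rw [hg, hc]; field_simp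
  have hzero : ∀ s, V s = 0 ↔ g s = c := by
    intro s; rw [hVg s, div_eq_zero_iff]
    constructor
    · rintro (h | h)
      · linarith
      · exact absurd h hcne
    · intro h; left; linarith
  have hposV : ∀ s, g s < c → 0 < V s := by
    intro s h; rw [hVg s]; exact div_pos (by linarith) hc0
  have hmono : StrictMonoOn g (Set.Ici 0) := by rw [hg]; exact gmono n hn
  have hanti : StrictAntiOn g (Set.Iic 0) := by rw [hg]; exact ganti n hn
  have hcont : Continuous g := by rw [hg]; fun_prop
  have hg0 : g 0 = (n:ℝ) + 1 := by simp [hg]; ring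
  -- existence of sp
  have hgc : c < g c := by
    have h1 := Real.add_one_le_exp c
    have h2 := Real.exp_pos (-(n:ℝ)*c)
    have h3 : 2*Real.exp c ≤ (n:ℝ)*Real.exp c :=
      mul_le_mul_of_nonneg_right ha2 (Real.exp_pos c).le
    simp only [hg]; nlinarith
  obtain ⟨sp, hspIcc, hgsp⟩ :=
    intermediate_value_Icc (le_of_lt hc0) hcont.continuousOn
      ⟨by rw [hg0]; linarith, le_of_lt hgc⟩
  have hsp0 : 0 < sp := by
    rcases lt_or_eq_of_le hspIcc.1 with h | h
    · exact h
    · exfalso; rw [← h, hg0] at hgsp; linarith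
  -- existence of sm
  have hgnc : c < g (-c) := by
    have h1 := Real.add_one_le_exp c
    have h2 : Real.exp c ≤ Real.exp ((n:ℝ)*c) := Real.exp_le_exp.mpr (by nlinarith)
    have h3 := Real.exp_pos (-c)
    have e : -(n:ℝ)*(-c) = (n:ℝ)*c := by ring
    simp only [hg, e]
    nlinarith [mul_pos (show (0:ℝ) < (n:ℝ) by linarith) h3]
  obtain ⟨sm, hsmIcc, hgsm⟩ :=
    intermediate_value_Icc' (by linarith : -c ≤ (0:ℝ)) hcont.continuousOn
      ⟨by rw [hg0]; linarith, le_of_lt hgnc⟩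
  have hsm0 : sm < 0 := by
    rcases lt_or_eq_of_le hsmIcc.2 with h | h
    · exact h
    · exfalso; rw [h, hg0] at hgsm; linarith
  -- uniqueness
  have huniq : ∀ s, V s = 0 → s = sm ∨ s = sp := by
    intro s hs
    rw [hzero s] at hs
    rcases le_or_gt s 0 with h | h
    · left
      exact hanti.injOn (Set.mem_Iic.mpr h) (Set.mem_Iic.mpr hsm0.le) (by rw [hs, hgsm])
    · right
      exact hmono.injOn (Set.mem_Ici.mpr h.le) (Set.mem_Ici.mpr hsp0.le) (by rw [hs, hgsp])
  -- positivity
  have hpos : ∀ s ∈ Set.Ioo sm sp, 0 < V s := by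
    intro s hs
    apply hposV
    rcases le_or_gt s 0 with h | h
    · have := hanti (Set.mem_Iic.mpr hsm0.le) (Set.mem_Iic.mpr h) hs.1
      rw [hgsm] at this; exact this
    · have := hmono (Set.mem_Ici.mpr h.le) (Set.mem_Ici.mpr hsp0.le) hs.2
      rw [hgsp] at this; exact this
  -- the derivative inequality
  have hfinal : Real.exp sp - Real.exp (-(n:ℝ)*sp) < Real.exp (-(n:ℝ)*sm) - Real.exp sm := by
    have hconstr : Real.exp (-(n:ℝ)*sm) + (n:ℝ)*Real.exp sm
        = Real.exp (-(n:ℝ)*sp) + (n:ℝ)*Real.exp sp := by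
      have h : g sm = g sp := by rw [hgsm, hgsp]
      simpa [hg] using h
    have hB1 : 1 < Real.exp sp := by
      have := Real.exp_lt_exp.mpr hsp0; simpa using this
    have hBp : Real.exp (-(n:ℝ)*sp) = (Real.exp sp ^ n)⁻¹ := by
      rw [neg_mul, Real.exp_neg, Real.exp_nat_mul]
    have hsm1 : Real.exp sm < 1 := by
      have := Real.exp_lt_exp.mpr hsm0; simpa using this
    rw [hBp] at hconstr ⊢
    rcases le_or_gt ((n:ℝ)+1) (2*(Real.exp sp^n)⁻¹ + ((n:ℝ)-1)*Real.exp sp) with hR | hR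
    · have h := mul_lt_mul_of_pos_left hsm1 (show (0:ℝ) < (n:ℝ)+1 by linarith)
      rw [mul_one] at h
      linarith
    · set E := (2*(Real.exp sp^n)⁻¹ + ((n:ℝ)-1)*Real.exp sp)/((n:ℝ)+1) with hE
      have hBn : (0:ℝ) < (Real.exp sp^n)⁻¹ := by positivity
      have hE0 : 0 < E := by
        rw [hE]; apply div_pos; nlinarith; linarith
      have hE1 : E < 1 := by
        rw [hE, div_lt_one (by linarith)]; linarith
      have hcrux := crux n hn (Real.exp sp) hB1 E hE
      have hexpτ : Real.exp (Real.log E) = E := Real.exp_log hE0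
      have hτ0 : Real.log E < 0 := Real.log_neg hE0 hE1
      have hgτ : g (Real.log E) = (E^n)⁻¹ + (n:ℝ)*E := by
        simp only [hg]
        rw [neg_mul, Real.exp_neg, Real.exp_nat_mul, hexpτ]
      have hgτc : g (Real.log E) < c := by
        rw [hgτ, ← hgsp]
        simp only [hg]
        rw [hBp]
        exact hcrux
      have hsmτ : sm < Real.log E := by
        by_contra hle
        push_neg at hle
        rcases eq_or_lt_of_le hle with he | hlt
        · rw [he, hgsm] at hgτc; linarith
        · have := hanti (Set.mem_Iic.mpr hτ0.le) (Set.mem_Iic.mpr hsm0.le) hlt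
          rw [hgsm] at this; linarith
      have hEsm : Real.exp sm < E := by
        rw [← hexpτ]; exact Real.exp_lt_exp.mpr hsmτ
      have hR' : ((n:ℝ)+1)*E = 2*(Real.exp sp^n)⁻¹ + ((n:ℝ)-1)*Real.exp sp := by
        rw [hE]; field_simp
      have h := mul_lt_mul_of_pos_left hEsm (show (0:ℝ) < (n:ℝ)+1 by linarith)
      rw [hR'] at h
      linarith
  exact ⟨sm, sp, hsm0, hsp0, (hzero sm).mpr hgsm, (hzero sp).mpr hgsp, huniq, hpos, hfinal⟩
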